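/- For a random d×d 0/1-matrix M and any k ≤ d−1, the probability that some k+1 columns of M have strong rank exactly k is at most C(d,k) · C(d,k+1) · (2^{-k} C(k, ⌊k/2⌋))^{d−k}. -/

import Mathlib

open scoped Classical
open Filter Matrix
open scoped symmDiff
open Finset Module

noncomputable section

/-- A 0/1-matrix (with `Bool` entries) viewed as a real matrix. -/
def bmToR {m n : Type*} (M : Matrix m n Bool) : Matrix m n ℝ :=
  fun i j => if M i j then 1 else 0

/-- a canonical nonzero kernel vector of a matrix, when one exists -/
def kvec {m n : Type*} [Fintype n] (B : Matrix m n ℝ) : n → ℝ :=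
  if h : ∃ c : n → ℝ, c ≠ 0 ∧ B.mulVec c = 0 then h.choose else 0

lemma kvec_prop {m n : Type*} [Fintype m] [Fintype n] (B : Matrix m n ℝ)
    (c : n → ℝ) (hc : c ≠ 0) (hBc : B.mulVec c = 0)
    (hrank : B.rank + 1 = Fintype.card n) :
    ∃ lam : ℝ, lam ≠ 0 ∧ kvec B = lam • c := by
  have hex : ∃ v : n → ℝ, v ≠ 0 ∧ B.mulVec v = 0 := ⟨c, hc, hBc⟩
  have hkv : kvec B ≠ 0 ∧ B.mulVec (kvec B) = 0 := by
    rw [kvec, dif_pos hex]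
    exact hex.choose_spec
  have hkerrank : finrank ℝ (LinearMap.ker B.mulVecLin) = 1 := by
    have h1 := LinearMap.finrank_range_add_finrank_ker B.mulVecLin
    rw [Module.finrank_fintype_fun_eq_card] at h1
    have h2 : B.rank = finrank ℝ (LinearMap.range B.mulVecLin) := rfl
    omega
  have hcmem : c ∈ LinearMap.ker B.mulVecLin := by
    rw [LinearMap.mem_ker, Matrix.mulVecLin_apply, hBc]
  have hle : (Submodule.span ℝ {c}) ≤ LinearMap.ker B.mulVecLin := by
    rw [Submodule.span_singleton_le_iff_mem]; exact hcmem
  have heq : Submodule.span ℝ {c} = LinearMap.ker B.mulVecLin := by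
    apply Submodule.eq_of_le_of_finrank_le hle
    rw [hkerrank, finrank_span_singleton hc]
  have hmem : kvec B ∈ Submodule.span ℝ {c} := by
    rw [heq, LinearMap.mem_ker, Matrix.mulVecLin_apply]
    exact hkv.2
  obtain ⟨lam, hlam⟩ := Submodule.mem_span_singleton.1 hmem
  refine ⟨lam, ?_, hlam.symm⟩
  rintro rfl
  exact hkv.1 (by rw [← hlam, zero_smul])


lemma sperner_count {ι : Type*} [Fintype ι] [DecidableEq ι] (c : ι → ℝ) (hc : ∀ i, c i ≠ 0) (τ : ℝ) :
    ((Finset.univ : Finset (ι → Bool)).filter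
        (fun x => ∑ i, c i * (if x i then 1 else 0) = τ)).card
      ≤ (Fintype.card ι).choose (Fintype.card ι / 2) := by
  classical
  set N : Finset ι := univ.filter (fun i => c i < 0) with hN
  set A : (ι → Bool) → Finset ι := fun x => univ.filter (fun i => x i) with hA
  have hAinj : Function.Injective A := by
    intro x y hxy
    funext i
    have : (i ∈ A x) ↔ (i ∈ A y) := by rw [hxy]
    simpa [hA] using this
  set Φ : (ι → Bool) → Finset ι := fun x => A x ∆ N with hΦ
  have hΦinj : Function.Injective Φ := fun x y h =>
    hAinj (symmDiff_left_injective N h)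
  -- key identity
  have key : ∀ x : ι → Bool, ∑ i, c i * (if x i then 1 else 0) = τ →
      ∑ i ∈ Φ x, |c i| = τ - ∑ i ∈ N, c i := by
    intro x hx
    have hsum : ∑ i ∈ A x, c i = τ := by
      rw [← hx]
      rw [Finset.sum_filter]
      apply Finset.sum_congr rfl
      intro i _
      by_cases h : x i <;> simp [h]
    have hdisj : Disjoint (A x \ N) (N \ A x) := by
      exact disjoint_sdiff_sdiff
    have hsd : Φ x = (A x \ N) ∪ (N \ A x) := by
      show A x ∆ N = _; rw [symmDiff_def, Finset.sup_eq_union]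
    rw [hsd, Finset.sum_union hdisj]
    have h1 : ∑ i ∈ A x \ N, |c i| = ∑ i ∈ A x \ N, c i := by
      apply Finset.sum_congr rfl
      intro i hi
      have : ¬ c i < 0 := by
        have := (Finset.mem_sdiff.1 hi).2
        simpa [hN] using this
      exact abs_of_nonneg (not_lt.1 this)
    have h2 : ∑ i ∈ N \ A x, |c i| = ∑ i ∈ N \ A x, -c i := by
      apply Finset.sum_congr rfl
      intro i hi
      have : c i < 0 := by
        have := (Finset.mem_sdiff.1 hi).1
        simpa [hN] using this
      exact abs_of_neg this
    have h3 : ∑ i ∈ A x ∩ N, c i + ∑ i ∈ A x \ N, c i = ∑ i ∈ A x, c i := by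
      have := Finset.sum_filter_add_sum_filter_not (A x) (fun i => i ∈ N) c
      rwa [Finset.filter_mem_eq_inter, ← Finset.sdiff_eq_filter] at this
    have h4 : ∑ i ∈ N ∩ A x, c i + ∑ i ∈ N \ A x, c i = ∑ i ∈ N, c i := by
      have := Finset.sum_filter_add_sum_filter_not N (fun i => i ∈ A x) c
      rwa [Finset.filter_mem_eq_inter, ← Finset.sdiff_eq_filter] at this
    have h5 : ∑ i ∈ A x ∩ N, c i = ∑ i ∈ N ∩ A x, c i := by rw [Finset.inter_comm]
    rw [h1, h2, Finset.sum_neg_distrib]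
    linarith
  set 𝒜 : Finset (Finset ι) :=
    (univ.filter (fun x : ι → Bool => ∑ i, c i * (if x i then 1 else 0) = τ)).image Φ with h𝒜
  have hcard : (univ.filter (fun x : ι → Bool =>
      ∑ i, c i * (if x i then 1 else 0) = τ)).card = 𝒜.card := by
    rw [h𝒜, Finset.card_image_of_injective _ hΦinj]
  rw [hcard]
  apply IsAntichain.sperner
  intro B1 hB1 B2 hB2 hne hle
  simp only [h𝒜, Finset.coe_image, Set.mem_image, Finset.mem_coe, Finset.mem_filter] at hB1 hB2
  obtain ⟨x1, hx1, rfl⟩ := hB1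
  obtain ⟨x2, hx2, rfl⟩ := hB2
  have k1 := key x1 hx1.2
  have k2 := key x2 hx2.2
  have hss : Φ x1 ⊂ Φ x2 := ⟨hle, fun h => hne (Finset.Subset.antisymm hle h)⟩
  obtain ⟨i, hi2, hi1⟩ := Finset.exists_of_ssubset hss
  have hsub : ∑ j ∈ Φ x2 \ Φ x1, |c j| + ∑ j ∈ Φ x1, |c j| = ∑ j ∈ Φ x2, |c j| :=
    Finset.sum_sdiff hle
  have hpos : 0 < ∑ j ∈ Φ x2 \ Φ x1, |c j| := by
    apply Finset.sum_pos'
    · intro j _; exact abs_nonneg _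
    · exact ⟨i, Finset.mem_sdiff.2 ⟨hi2, hi1⟩, abs_pos.2 (hc i)⟩
  linarith

lemma count_row {n : Type*} [Fintype n] [DecidableEq n] (s : Finset n) (c : {x // x ∈ s} → ℝ)
    (hc : ∀ j, c j ≠ 0) (τ : ℝ) :
    ((Finset.univ : Finset (n → Bool)).filter
        (fun q => ∑ j : {x // x ∈ s}, c j * (if q j.1 then 1 else 0) = τ)).card
      ≤ s.card.choose (s.card / 2) * 2 ^ (Fintype.card n - s.card) := by
  classical
  set T : Finset ({x // x ∈ s} → Bool) :=
    Finset.univ.filter (fun y => ∑ j : {x // x ∈ s}, c j * (if y j then 1 else 0) = τ) with hT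
  have hTcard : T.card ≤ s.card.choose (s.card / 2) := by
    rw [hT]
    have := sperner_count c hc τ
    simpa only [Fintype.card_coe] using this
  have hinj : Set.InjOn (fun q : n → Bool =>
      ((fun j : {x // x ∈ s} => q j.1, fun j : {x // x ∉ s} => q j.1) :
        ({x // x ∈ s} → Bool) × ({x // x ∉ s} → Bool)))
      ((Finset.univ : Finset (n → Bool)).filter
        (fun q => ∑ j : {x // x ∈ s}, c j * (if q j.1 then 1 else 0) = τ)) := by
    intro q1 _ q2 _ h
    have h1 := congrArg Prod.fst h
    have h2 := congrArg Prod.snd h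
    funext j
    by_cases hj : j ∈ s
    · exact congrFun h1 ⟨j, hj⟩
    · exact congrFun h2 ⟨j, hj⟩
  have hmaps : ∀ q ∈ (Finset.univ : Finset (n → Bool)).filter
      (fun q => ∑ j : {x // x ∈ s}, c j * (if q j.1 then 1 else 0) = τ),
      ((fun j : {x // x ∈ s} => q j.1, fun j : {x // x ∉ s} => q j.1) :
        ({x // x ∈ s} → Bool) × ({x // x ∉ s} → Bool)) ∈
        T ×ˢ (Finset.univ : Finset ({x // x ∉ s} → Bool)) := by
    intro q hq
    rw [Finset.mem_product]
    refine ⟨?_, Finset.mem_univ _⟩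
    rw [hT, Finset.mem_filter]
    exact ⟨Finset.mem_univ _, (Finset.mem_filter.1 hq).2⟩
  calc ((Finset.univ : Finset (n → Bool)).filter
        (fun q => ∑ j : {x // x ∈ s}, c j * (if q j.1 then 1 else 0) = τ)).card
      ≤ (T ×ˢ (Finset.univ : Finset ({x // x ∉ s} → Bool))).card :=
        Finset.card_le_card_of_injOn _ hmaps hinj
    _ = T.card * 2 ^ (Fintype.card n - s.card) := by
        rw [Finset.card_product, Finset.card_univ, Fintype.card_fun]
        congr 2
        simp [Fintype.card_subtype_compl, Fintype.card_coe]
    _ ≤ s.card.choose (s.card / 2) * 2 ^ (Fintype.card n - s.card) :=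
        Nat.mul_le_mul_right _ hTcard

lemma exists_witness {d k : ℕ} (M : Matrix (Fin d) (Fin d) Bool) (s : Finset (Fin d))
    (hs : s.card = k + 1)
    (ht : ∀ t ⊆ s, t.card = k →
      LinearIndependent ℝ (fun j : {x // x ∈ t} => (bmToR M)ᵀ j.1))
    (hd : ¬ LinearIndependent ℝ (fun j : {x // x ∈ s} => (bmToR M)ᵀ j.1)) :
    ∃ R : Finset (Fin d), R.card = k ∧
      (∀ j : {x // x ∈ s},
        kvec (fun (i : {x // x ∈ R}) (j : {x // x ∈ s}) => bmToR M i.1 j.1) j ≠ 0) ∧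
      ∀ i : Fin d, ∑ j : {x // x ∈ s},
        kvec (fun (i : {x // x ∈ R}) (j : {x // x ∈ s}) => bmToR M i.1 j.1) j
          * bmToR M i j.1 = 0 := by
  classical
  obtain ⟨c, hrel, j1, hj1⟩ := Fintype.not_linearIndependent_iff.1 hd
  -- all coordinates of c are nonzero
  have hzero : ∀ j0 : {x // x ∈ s}, c j0 = 0 → ∀ j, c j = 0 := by
    intro j0 hj0 j
    set t : Finset (Fin d) := s.erase j0.1 with htdef
    have htsub : t ⊆ s := s.erase_subset _
    have htcard : t.card = k := by
      rw [htdef, Finset.card_erase_of_mem j0.2, hs]; omega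
    have hind := ht t htsub htcard
    set F : Fin d → (Fin d → ℝ) :=
      fun j => (if h : j ∈ s then c ⟨j, h⟩ else 0) • (bmToR M)ᵀ j with hF
    have hFs : ∑ x ∈ s, F x = 0 := by
      rw [← Finset.sum_coe_sort s F, ← hrel]
      apply Finset.sum_congr rfl
      intro x _
      rw [hF]
      simp only [dif_pos x.2, Subtype.coe_eta]
    have hF0 : F j0.1 = 0 := by
      rw [hF]
      simp only [dif_pos j0.2, Subtype.coe_eta, hj0, zero_smul]
    have hFt : ∑ x ∈ t, F x = 0 := by
      have := Finset.add_sum_erase s F j0.2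
      rw [← htdef] at this
      rw [← this, hF0, zero_add] at hFs
      exact hFs
    set g' : {x // x ∈ t} → ℝ := fun jt => if h : jt.1 ∈ s then c ⟨jt.1, h⟩ else 0 with hg'
    have hrelt : ∑ jt : {x // x ∈ t}, g' jt • (bmToR M)ᵀ jt.1 = 0 := by
      rw [← hFt, ← Finset.sum_coe_sort t F]
    have hga := Fintype.linearIndependent_iff.1 hind g' hrelt
    by_cases hjj : j = j0
    · rw [hjj]; exact hj0
    · have hmem : j.1 ∈ t := Finset.mem_erase.2
        ⟨fun h => hjj (Subtype.ext h), j.2⟩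
      have := hga ⟨j.1, hmem⟩
      rw [hg'] at this
      simpa only [dif_pos j.2, Subtype.coe_eta] using this
  have hall : ∀ j, c j ≠ 0 := by
    intro j0 h0
    exact hj1 (hzero j0 h0 j1)
  -- construct R
  set t0 : Finset (Fin d) := s.erase j1.1 with ht0def
  have ht0sub : t0 ⊆ s := s.erase_subset _
  have ht0card : t0.card = k := by rw [ht0def, Finset.card_erase_of_mem j1.2, hs]; omega
  have hindT := ht t0 ht0sub ht0card
  set N : Matrix (Fin d) {x // x ∈ t0} ℝ := fun i jt => bmToR M i jt.1 with hN
  have hindT' : LinearIndependent ℝ Nᵀ := hindT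
  have hrkNT : Nᵀ.rank = Fintype.card {x // x ∈ t0} := hindT'.rank_matrix
  have hrkN : N.rank = k := by
    rw [← Matrix.rank_transpose, hrkNT, Fintype.card_coe, ht0card]
  have hspanN : Submodule.span ℝ (Set.range N) = ⊤ := by
    apply Submodule.eq_top_of_finrank_eq
    change finrank ℝ (Submodule.span ℝ (Set.range N.row)) = _
    rw [← Matrix.rank_eq_finrank_span_row, hrkN, Module.finrank_fintype_fun_eq_card,
      Fintype.card_coe, ht0card]
  obtain ⟨b, hbsub, hbspan, hbind⟩ := exists_linearIndependent ℝ (Set.range N)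
  have hbfin : b.Finite := hbind.setFinite
  haveI : Fintype b := hbfin.fintype
  have hbtop : Submodule.span ℝ b = ⊤ := by rw [hbspan, hspanN]
  have basis : Basis b ℝ ({x // x ∈ t0} → ℝ) :=
    Basis.mk hbind (by rw [Subtype.range_coe, hbtop])
  have hbcard : Fintype.card b = k := by
    have := Module.finrank_eq_card_basis basis
    rw [Module.finrank_fintype_fun_eq_card, Fintype.card_coe, ht0card] at this
    exact this.symm
  set g : b → Fin d := fun v => (hbsub v.2).choose with hgdef
  have hg : ∀ v : b, N (g v) = v.1 := fun v => (hbsub v.2).choose_spec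
  have hginj : Function.Injective g := by
    intro v1 v2 h
    apply Subtype.ext
    rw [← hg v1, ← hg v2, h]
  set R : Finset (Fin d) := Finset.univ.image g with hRdef
  have hRcard : R.card = k := by
    rw [hRdef, Finset.card_image_of_injective _ hginj, Finset.card_univ, hbcard]
  have hrowmem : ∀ i : {x // x ∈ R}, N i.1 ∈ b := by
    intro i
    obtain ⟨v, -, hv⟩ := Finset.mem_image.1 i.2
    rw [← hv, hg v]
    exact v.2
  set e : {x // x ∈ R} → b := fun i => ⟨N i.1, hrowmem i⟩ with hedef
  have heinj : Function.Injective e := by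
    intro i1 i2 h
    have hNe : N i1.1 = N i2.1 := congrArg Subtype.val h
    obtain ⟨v1, -, hv1⟩ := Finset.mem_image.1 i1.2
    obtain ⟨v2, -, hv2⟩ := Finset.mem_image.1 i2.2
    have : v1 = v2 := by
      apply Subtype.ext
      rw [← hg v1, ← hg v2, hv1, hv2, hNe]
    apply Subtype.ext
    rw [← hv1, ← hv2, this]
  have hrowind : LinearIndependent ℝ (fun i : {x // x ∈ R} => N i.1) := by
    have : (fun i : {x // x ∈ R} => N i.1) = (fun v : b => v.1) ∘ e := rfl
    rw [this]
    exact hbind.comp e heinj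
  -- the submatrix B
  set B : Matrix {x // x ∈ R} {x // x ∈ s} ℝ :=
    fun i j => bmToR M i.1 j.1 with hB
  have hBrows : LinearIndependent ℝ B := by
    apply LinearIndependent.of_comp
      (LinearMap.funLeft ℝ ℝ (fun jt : {x // x ∈ t0} => (⟨jt.1, ht0sub jt.2⟩ : {x // x ∈ s})))
    exact hrowind
  have hBrank : B.rank + 1 = Fintype.card {x // x ∈ s} := by
    rw [hBrows.rank_matrix (M := B), Fintype.card_coe, Fintype.card_coe, hRcard, hs]
  -- c is in the kernel of B
  have hci : ∀ i : Fin d, ∑ j : {x // x ∈ s}, c j * bmToR M i j.1 = 0 := by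
    intro i
    have := congrFun hrel i
    rw [Finset.sum_apply] at this
    simpa only [Pi.smul_apply, smul_eq_mul, Matrix.transpose_apply, Pi.zero_apply] using this
  have hBc : B.mulVec c = 0 := by
    funext i
    rw [Matrix.mulVec, dotProduct]
    simp only [hB, Pi.zero_apply]
    rw [← hci i.1]
    apply Finset.sum_congr rfl
    intro j _
    ring
  have hcne : c ≠ 0 := by
    intro h
    exact hall j1 (by rw [h]; rfl)
  obtain ⟨lam, hlam, hkv⟩ := kvec_prop B c hcne hBc hBrank
  refine ⟨R, hRcard, ?_, ?_⟩
  · intro j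
    rw [hB] at hkv
    rw [hkv, Pi.smul_apply, smul_eq_mul]
    exact mul_ne_zero hlam (hall j)
  · intro i
    rw [hB] at hkv
    rw [hkv]
    have : ∑ j : {x // x ∈ s}, (lam • c) j * bmToR M i j.1
        = lam * ∑ j : {x // x ∈ s}, c j * bmToR M i j.1 := by
      rw [Finset.mul_sum]
      apply Finset.sum_congr rfl
      intro j _
      rw [Pi.smul_apply, smul_eq_mul]
      ring
    rw [this, hci i, mul_zero]

lemma F_card {d k : ℕ} (s R : Finset (Fin d)) (hs : s.card = k + 1) (hR : R.card = k) :
    ((Finset.univ : Finset (Matrix (Fin d) (Fin d) Bool)).filter (fun M =>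
      (∀ j : {x // x ∈ s},
        kvec (fun (i : {x // x ∈ R}) (j : {x // x ∈ s}) => bmToR M i.1 j.1) j ≠ 0) ∧
      ∀ i : Fin d, ∑ j : {x // x ∈ s},
        kvec (fun (i : {x // x ∈ R}) (j : {x // x ∈ s}) => bmToR M i.1 j.1) j
          * bmToR M i j.1 = 0)).card
    ≤ 2 ^ (k * d) * ((k + 1).choose ((k + 1) / 2) * 2 ^ (d - (k + 1))) ^ (d - k) := by
  classical
  set κ : ({x // x ∈ R} → Fin d → Bool) → ({x // x ∈ s} → ℝ) :=
    fun P => kvec (fun (i : {x // x ∈ R}) (j : {x // x ∈ s}) =>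
      if P i j.1 then (1 : ℝ) else 0) with hκ
  set ρ : Matrix (Fin d) (Fin d) Bool → ({x // x ∈ R} → Fin d → Bool) :=
    fun M i j => M i.1 j with hρ
  have hsub : ∀ M : Matrix (Fin d) (Fin d) Bool,
      (fun (i : {x // x ∈ R}) (j : {x // x ∈ s}) => bmToR M i.1 j.1)
        = (fun (i : {x // x ∈ R}) (j : {x // x ∈ s}) =>
            if ρ M i j.1 then (1 : ℝ) else 0) := fun M => rfl
  set F := (Finset.univ : Finset (Matrix (Fin d) (Fin d) Bool)).filter (fun M =>
      (∀ j : {x // x ∈ s},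
        kvec (fun (i : {x // x ∈ R}) (j : {x // x ∈ s}) => bmToR M i.1 j.1) j ≠ 0) ∧
      ∀ i : Fin d, ∑ j : {x // x ∈ s},
        kvec (fun (i : {x // x ∈ R}) (j : {x // x ∈ s}) => bmToR M i.1 j.1) j
          * bmToR M i j.1 = 0) with hF
  have hfib : F.card = ∑ P ∈ (Finset.univ : Finset ({x // x ∈ R} → Fin d → Bool)),
      (F.filter (fun M => ρ M = P)).card :=
    Finset.card_eq_sum_card_fiberwise (fun M _ => Finset.mem_univ (ρ M))
  have hper : ∀ P : {x // x ∈ R} → Fin d → Bool,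
      (F.filter (fun M => ρ M = P)).card
        ≤ ((k + 1).choose ((k + 1) / 2) * 2 ^ (d - (k + 1))) ^ (d - k) := by
    intro P
    by_cases hκP : ∀ j : {x // x ∈ s}, κ P j ≠ 0
    · -- injection into functions to the solution set
      set Sol : Finset (Fin d → Bool) := Finset.univ.filter
        (fun q => ∑ j : {x // x ∈ s}, κ P j * (if q j.1 then 1 else 0) = 0) with hSol
      have hSolcard : Sol.card ≤ (k + 1).choose ((k + 1) / 2) * 2 ^ (d - (k + 1)) := by
        rw [hSol]
        have := count_row s (κ P) hκP 0
        rw [hs] at this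
        simpa only [Fintype.card_fin] using this
      have hinj : ∀ M ∈ F.filter (fun M => ρ M = P),
          ∀ M' ∈ F.filter (fun M => ρ M = P),
          (fun i : {x // x ∉ R} => M i.1) = (fun i : {x // x ∉ R} => M' i.1) → M = M' := by
        intro M hM M' hM' h
        have hPM : ρ M = P := (Finset.mem_filter.1 hM).2
        have hPM' : ρ M' = P := (Finset.mem_filter.1 hM').2
        funext i
        by_cases hi : i ∈ R
        · have h1 : ρ M ⟨i, hi⟩ = ρ M' ⟨i, hi⟩ := by rw [hPM, hPM']
          exact h1
        · exact congrFun h ⟨i, hi⟩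
      -- map into the finset of functions {x ∉ R} → Sol
      have hmaps : ∀ M ∈ F.filter (fun M => ρ M = P),
          (fun i : {x // x ∉ R} => M i.1) ∈
            Finset.univ.filter (fun q : {x // x ∉ R} → Fin d → Bool =>
              ∀ i, q i ∈ Sol) := by
        intro M hM
        rw [Finset.mem_filter]
        refine ⟨Finset.mem_univ _, fun i => ?_⟩
        rw [hSol, Finset.mem_filter]
        refine ⟨Finset.mem_univ _, ?_⟩
        have hPM : ρ M = P := (Finset.mem_filter.1 hM).2
        have hcond := ((Finset.mem_filter.1 hM).1)
        have hcond2 := (Finset.mem_filter.1 hcond).2.2 i.1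
        rw [hsub M, hPM] at hcond2
        exact hcond2
      calc (F.filter (fun M => ρ M = P)).card
          ≤ (Finset.univ.filter (fun q : {x // x ∉ R} → Fin d → Bool =>
              ∀ i, q i ∈ Sol)).card :=
            Finset.card_le_card_of_injOn _ hmaps (fun M hM M' hM' h => hinj M hM M' hM' h)
        _ ≤ Sol.card ^ (d - k) := by
            set g : ({x // x ∉ R} → {y // y ∈ Sol}) → ({x // x ∉ R} → Fin d → Bool) :=
              fun h i => (h i).1 with hg
            have hsubim : Finset.univ.filter (fun q : {x // x ∉ R} → Fin d → Bool =>
                ∀ i, q i ∈ Sol) ⊆ Finset.image g Finset.univ := by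
              intro q hq
              rw [Finset.mem_image]
              exact ⟨fun i => ⟨q i, (Finset.mem_filter.1 hq).2 i⟩, Finset.mem_univ _, rfl⟩
            have hcard := Finset.card_le_card hsubim
            have h2 := Finset.card_image_le (f := g) (s := Finset.univ)
            have h3 : Fintype.card ({x // x ∉ R} → {y // y ∈ Sol})
                = Sol.card ^ (d - k) := by
              rw [Fintype.card_fun, Fintype.card_coe]
              congr 1
              rw [Fintype.card_subtype_compl, Fintype.card_fin, Fintype.card_coe, hR]
            rw [Finset.card_univ, h3] at h2
            exact le_trans hcard h2
        _ ≤ ((k + 1).choose ((k + 1) / 2) * 2 ^ (d - (k + 1))) ^ (d - k) :=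
            Nat.pow_le_pow_left hSolcard _
    · -- fiber is empty
      have : F.filter (fun M => ρ M = P) = ∅ := by
        rw [Finset.filter_eq_empty_iff]
        intro M hM
        intro hPM
        apply hκP
        intro j
        have hcond := (Finset.mem_filter.1 hM).2.1 j
        rw [hsub M, hPM] at hcond
        exact hcond
      rw [this]
      simp
  calc F.card = ∑ P ∈ (Finset.univ : Finset ({x // x ∈ R} → Fin d → Bool)),
        (F.filter (fun M => ρ M = P)).card := hfib
    _ ≤ ∑ P ∈ (Finset.univ : Finset ({x // x ∈ R} → Fin d → Bool)),
        ((k + 1).choose ((k + 1) / 2) * 2 ^ (d - (k + 1))) ^ (d - k) :=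
        Finset.sum_le_sum (fun P _ => hper P)
    _ = 2 ^ (k * d) * ((k + 1).choose ((k + 1) / 2) * 2 ^ (d - (k + 1))) ^ (d - k) := by
        rw [Finset.sum_const, Finset.card_univ, smul_eq_mul]
        congr 1
        rw [Fintype.card_fun, Fintype.card_fun, Fintype.card_coe, Fintype.card_fin,
          Fintype.card_bool, hR, ← pow_mul, mul_comm d k]

lemma choose_succ_le (k : ℕ) : (k + 1).choose ((k + 1) / 2) ≤ 2 * k.choose (k / 2) := by
  rcases Nat.eq_zero_or_pos ((k + 1) / 2) with h | h
  · rw [h, Nat.choose_zero_right]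
    have : 1 ≤ k.choose (k / 2) := Nat.succ_le_of_lt (Nat.choose_pos (Nat.div_le_self _ _))
    omega
  · obtain ⟨m, hm⟩ := Nat.exists_eq_add_of_le h
    rw [show (k + 1) / 2 = m + 1 by omega, Nat.choose_succ_succ']
    have h1 := Nat.choose_le_middle m k
    have h2 := Nat.choose_le_middle (m + 1) k
    omega

/-- For a random `d × d` 0/1-matrix and any `k ≤ d - 1`, the probability that some `k + 1`
columns have strong rank exactly `k` is at most
`C(d,k) · C(d,k+1) · (2^{-k} C(k, ⌊k/2⌋))^{d-k}`. -/
theorem stmt6 (d k : ℕ) (hk : k + 1 ≤ d) :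
    ((Finset.univ.filter (fun M : Matrix (Fin d) (Fin d) Bool =>
        ∃ s : Finset (Fin d), s.card = k + 1 ∧
          (∀ t ⊆ s, t.card = k →
            LinearIndependent ℝ (fun j : {x // x ∈ t} => (bmToR M)ᵀ j.1)) ∧
          ¬ LinearIndependent ℝ (fun j : {x // x ∈ s} => (bmToR M)ᵀ j.1))).card : ℝ)
      / 2 ^ (d * d)
      ≤ (d.choose k : ℝ) * (d.choose (k + 1)) *
          ((2 : ℝ) ^ (-(k : ℤ)) * (k.choose (k / 2))) ^ (d - k) := by
  classical
  obtain ⟨m, rfl⟩ : ∃ m, d = k + m := ⟨d - k, by omega⟩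
  have hm : 1 ≤ m := by omega
  set d := k + m with hd
  set Fset : Finset (Fin d) → Finset (Fin d) → Finset (Matrix (Fin d) (Fin d) Bool) :=
    fun s R => (Finset.univ : Finset (Matrix (Fin d) (Fin d) Bool)).filter (fun M =>
      (∀ j : {x // x ∈ s},
        kvec (fun (i : {x // x ∈ R}) (j : {x // x ∈ s}) => bmToR M i.1 j.1) j ≠ 0) ∧
      ∀ i : Fin d, ∑ j : {x // x ∈ s},
        kvec (fun (i : {x // x ∈ R}) (j : {x // x ∈ s}) => bmToR M i.1 j.1) j
          * bmToR M i j.1 = 0) with hFset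
  set E := Finset.univ.filter (fun M : Matrix (Fin d) (Fin d) Bool =>
        ∃ s : Finset (Fin d), s.card = k + 1 ∧
          (∀ t ⊆ s, t.card = k →
            LinearIndependent ℝ (fun j : {x // x ∈ t} => (bmToR M)ᵀ j.1)) ∧
          ¬ LinearIndependent ℝ (fun j : {x // x ∈ s} => (bmToR M)ᵀ j.1)) with hE
  have hsubE : E ⊆ (Finset.univ.powersetCard (k + 1)).biUnion
      (fun s => (Finset.univ.powersetCard k).biUnion (fun R => Fset s R)) := by
    intro M hM
    obtain ⟨-, s, hs, ht, hdep⟩ := Finset.mem_filter.1 hM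
    obtain ⟨R, hR, h1, h2⟩ := exists_witness M s hs ht hdep
    rw [Finset.mem_biUnion]
    refine ⟨s, Finset.mem_powersetCard.2 ⟨Finset.subset_univ _, hs⟩, ?_⟩
    rw [Finset.mem_biUnion]
    refine ⟨R, Finset.mem_powersetCard.2 ⟨Finset.subset_univ _, hR⟩, ?_⟩
    rw [hFset, Finset.mem_filter]
    exact ⟨Finset.mem_univ _, h1, h2⟩
  set B0 : ℕ := 2 ^ (k * d) * ((k + 1).choose ((k + 1) / 2) * 2 ^ (d - (k + 1))) ^ (d - k)
    with hB0
  have hEcard : E.card ≤ d.choose (k + 1) * (d.choose k * B0) := by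
    calc E.card ≤ ((Finset.univ.powersetCard (k + 1)).biUnion
          (fun s => (Finset.univ.powersetCard k).biUnion (fun R => Fset s R))).card :=
          Finset.card_le_card hsubE
      _ ≤ ∑ s ∈ Finset.univ.powersetCard (k + 1),
            ((Finset.univ.powersetCard k).biUnion (fun R => Fset s R)).card :=
          Finset.card_biUnion_le
      _ ≤ ∑ s ∈ Finset.univ.powersetCard (k + 1),
            ∑ R ∈ Finset.univ.powersetCard k, (Fset s R).card :=
          Finset.sum_le_sum (fun s _ => Finset.card_biUnion_le)
      _ ≤ ∑ s ∈ Finset.univ.powersetCard (k + 1),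
            ∑ R ∈ Finset.univ.powersetCard k, B0 := by
          apply Finset.sum_le_sum
          intro s hsmem
          apply Finset.sum_le_sum
          intro R hRmem
          exact F_card s R (Finset.mem_powersetCard.1 hsmem).2
            (Finset.mem_powersetCard.1 hRmem).2
      _ = d.choose (k + 1) * (d.choose k * B0) := by
          rw [Finset.sum_const, Finset.sum_const, smul_eq_mul, smul_eq_mul,
            Finset.card_powersetCard, Finset.card_powersetCard, Finset.card_univ,
            Fintype.card_fin]
  -- simplify B0 using the central binomial bound
  have hdk : d - k = m := by omega
  have hdk1 : d - (k + 1) = m - 1 := by omega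
  have hB0le : B0 ≤ 2 ^ (k * d) * (k.choose (k / 2) * 2 ^ m) ^ m := by
    rw [hB0, hdk, hdk1]
    apply Nat.mul_le_mul_left
    apply Nat.pow_le_pow_left
    calc (k + 1).choose ((k + 1) / 2) * 2 ^ (m - 1)
        ≤ 2 * k.choose (k / 2) * 2 ^ (m - 1) :=
          Nat.mul_le_mul_right _ (choose_succ_le k)
      _ = k.choose (k / 2) * 2 ^ m := by
          rw [mul_comm 2 (k.choose (k / 2)), mul_assoc, mul_comm (2 : ℕ) (2 ^ (m - 1)),
            ← pow_succ, show m - 1 + 1 = m from by omega]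
  have hEcard2 : E.card ≤ d.choose (k + 1) * (d.choose k *
      (2 ^ (k * d) * (k.choose (k / 2) * 2 ^ m) ^ m)) :=
    le_trans hEcard (by
      apply Nat.mul_le_mul_left
      exact Nat.mul_le_mul_left _ hB0le)
  -- now the real-number computation
  rw [hdk]
  have hpos : (0 : ℝ) < 2 ^ (d * d) := by positivity
  rw [div_le_iff₀ hpos]
  have hcast : (E.card : ℝ) ≤ (d.choose (k + 1) : ℝ) * (d.choose k *
      (2 ^ (k * d) * ((k.choose (k / 2)) * 2 ^ m) ^ m)) := by
    have := hEcard2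
    have h2 := (Nat.cast_le (α := ℝ)).2 this
    push_cast at h2
    convert h2 using 2
  refine le_trans hcast (le_of_eq ?_)
  have hzpow : ((2 : ℝ) ^ (-(k : ℤ))) = ((2 : ℝ) ^ k)⁻¹ := by
    rw [_root_.zpow_neg, zpow_natCast]
  rw [hzpow]
  have h2k : ((2 : ℝ) ^ k) ≠ 0 := by positivity
  have hdd : d * d = k * d + (m * m + k * m) := by
    rw [hd]; ring
  rw [hdd, pow_add, pow_add]
  field_simp
  rw [div_pow, ← pow_mul]
  field_simp
  ring
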